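/- Let M = (⋃_{n≥0} A_n) ∪ ([0,1]×{0}) ⊆ ℝ², where A_n = {(k/2ⁿ, 1/2ⁿ) : k ∈ {0,…,2ⁿ}}, let N be a norm on ℝ² with max(|v₁|,|v₂|) ≤ N(v₁,v₂) ≤ |v₁|+|v₂| for all (v₁,v₂) ∈ ℝ², and endow M with the metric d(u,v) = N(u−v). Then for every Banach space Y, SNA(M,Y) is dense: for every Lipschitz map f : M → Y and every ε > 0 there is a Lipschitz map g : M → Y that strongly attains its norm and satisfies ‖f−g‖_L ≤ ε. -/

import Mathlib

/-- The level `A_n = {(k/2ⁿ, 1/2ⁿ) : 0 ≤ k ≤ 2ⁿ}`. -/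
def Aset (n : ℕ) : Set (ℝ × ℝ) :=
  {p | ∃ k : ℕ, k ≤ 2 ^ n ∧ p = ((k : ℝ) / 2 ^ n, 1 / 2 ^ n)}

/-- The metric space `M = (⋃ₙ Aₙ) ∪ ([0,1] × {0}) ⊆ ℝ²`. -/
def Mset : Set (ℝ × ℝ) := (⋃ n : ℕ, Aset n) ∪ (Set.Icc (0 : ℝ) 1 ×ˢ ({0} : Set ℝ))

/-- `N` is a norm on `ℝ²` satisfying `‖·‖_∞ ≤ N ≤ ‖·‖₁`. -/
def IsNormBetween (N : ℝ × ℝ → ℝ) : Prop :=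
  (∀ u v : ℝ × ℝ, N (u + v) ≤ N u + N v) ∧
  (∀ (c : ℝ) (v : ℝ × ℝ), N (c • v) = |c| * N v) ∧
  (∀ v : ℝ × ℝ, max |v.1| |v.2| ≤ N v ∧ N v ≤ |v.1| + |v.2|)

/-- `f : M → Y` is Lipschitz with respect to the metric `d(u,v) = N(u - v)`. -/
def LipM {Y : Type*} [NormedAddCommGroup Y] (N : ℝ × ℝ → ℝ) (f : ↥Mset → Y) : Prop :=
  ∃ K : ℝ, ∀ p q : ↥Mset, ‖f p - f q‖ ≤ K * N ((p : ℝ × ℝ) - (q : ℝ × ℝ))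

/-- The least Lipschitz constant of `f : M → Y` with respect to `d(u,v) = N(u - v)`. -/
noncomputable def lipNM {Y : Type*} [NormedAddCommGroup Y] (N : ℝ × ℝ → ℝ)
    (f : ↥Mset → Y) : ℝ :=
  sSup {r : ℝ | ∃ p q : ↥Mset, p ≠ q ∧ r = ‖f p - f q‖ / N ((p : ℝ × ℝ) - (q : ℝ × ℝ))}

/-- `f` strongly attains its norm on `(M, N)`. -/
def SNAM {Y : Type*} [NormedAddCommGroup Y] (N : ℝ × ℝ → ℝ) (f : ↥Mset → Y) : Prop :=
  ∃ p q : ↥Mset, p ≠ q ∧ ‖f p - f q‖ = lipNM N f * N ((p : ℝ × ℝ) - (q : ℝ × ℝ))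

set_option maxHeartbeats 1000000

namespace SNAMaux

/-- the dyadic scale `1/2^n` -/
noncomputable def w (n : ℕ) : ℝ := 1 / 2 ^ n

lemma w_pos (n : ℕ) : 0 < w n := by
  unfold w; positivity

lemma w_half (n : ℕ) : w (n + 1) = w n / 2 := by
  unfold w; rw [pow_succ]; ring

lemma w_mono {m n : ℕ} (h : m ≤ n) : w n ≤ w m := by
  unfold w
  apply one_div_le_one_div_of_le (by positivity)
  exact pow_le_pow_right₀ (by norm_num) h

lemma w_le_one (n : ℕ) : w n ≤ 1 := by
  have := w_mono (Nat.zero_le n); simpa [w] using this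

lemma w_lt_double {m n : ℕ} (h : m < n) : w n + w n ≤ w m := by
  have h1 : w (m+1) = w m / 2 := w_half m
  have h2 : w n ≤ w (m+1) := w_mono h
  linarith

lemma w_pow (n : ℕ) : w n = (1/2 : ℝ) ^ n := by
  unfold w; rw [div_pow]; norm_num

/-- grid point -/
noncomputable def gridPt (n k : ℕ) : ℝ × ℝ := ((k : ℝ) / 2 ^ n, w n)

/-- segment point -/
def segPt (t : ℝ) : ℝ × ℝ := (t, 0)

lemma gridPt_mem {n k : ℕ} (hk : k ≤ 2 ^ n) : gridPt n k ∈ Mset := by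
  left
  exact Set.mem_iUnion.mpr ⟨n, ⟨k, hk, rfl⟩⟩

lemma segPt_mem {t : ℝ} (h0 : 0 ≤ t) (h1 : t ≤ 1) : segPt t ∈ Mset := by
  right
  exact ⟨⟨h0, h1⟩, rfl⟩

/-- canonical elements of the subtype -/
noncomputable def gridM (n k : ℕ) (hk : k ≤ 2 ^ n) : ↥Mset := ⟨gridPt n k, gridPt_mem hk⟩

noncomputable def segM (t : ℝ) (h0 : 0 ≤ t) (h1 : t ≤ 1) : ↥Mset := ⟨segPt t, segPt_mem h0 h1⟩

lemma Mset_cases {z : ℝ × ℝ} (hz : z ∈ Mset) :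
    (∃ n k : ℕ, k ≤ 2 ^ n ∧ z = gridPt n k) ∨ (∃ t : ℝ, 0 ≤ t ∧ t ≤ 1 ∧ z = segPt t) := by
  rcases hz with h | h
  · rcases Set.mem_iUnion.mp h with ⟨n, k, hk, hzz⟩
    exact Or.inl ⟨n, k, hk, hzz⟩
  · rcases h with ⟨h1, h2⟩
    right
    refine ⟨z.1, h1.1, h1.2, ?_⟩
    have : z.2 = 0 := h2
    exact Prod.ext rfl this

section Nlemmas

variable {N : ℝ × ℝ → ℝ}

lemma N_nonneg (hN : IsNormBetween N) (v : ℝ × ℝ) : 0 ≤ N v :=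
  le_trans (le_max_left _ _ |>.trans' (abs_nonneg _)) (hN.2.2 v).1

lemma N_fst_le (hN : IsNormBetween N) (v : ℝ × ℝ) : |v.1| ≤ N v :=
  le_trans (le_max_left _ _) (hN.2.2 v).1

lemma N_snd_le (hN : IsNormBetween N) (v : ℝ × ℝ) : |v.2| ≤ N v :=
  le_trans (le_max_right _ _) (hN.2.2 v).1

lemma N_le_l1 (hN : IsNormBetween N) (v : ℝ × ℝ) : N v ≤ |v.1| + |v.2| := (hN.2.2 v).2

lemma N_neg (hN : IsNormBetween N) (v : ℝ × ℝ) : N (-v) = N v := by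
  have := hN.2.1 (-1) v
  simpa using this

lemma N_zero (hN : IsNormBetween N) : N 0 = 0 := by
  have := hN.2.1 0 0
  simpa using this

lemma N_pos (hN : IsNormBetween N) {v : ℝ × ℝ} (hv : v ≠ 0) : 0 < N v := by
  have h' : v.1 ≠ 0 ∨ v.2 ≠ 0 := by
    by_contra hc
    push_neg at hc
    exact hv (Prod.ext hc.1 hc.2)
  rcases h' with h1 | h2
  · exact lt_of_lt_of_le (abs_pos.mpr h1) (N_fst_le hN v)
  · exact lt_of_lt_of_le (abs_pos.mpr h2) (N_snd_le hN v)

lemma N_horiz (hN : IsNormBetween N) (h : ℝ) : N (h, 0) = |h| := by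
  have h1 := (hN.2.2 (h, 0)).1
  have h2 := (hN.2.2 (h, 0)).2
  simp only [abs_zero, max_eq_left (abs_nonneg h), add_zero] at h1 h2
  linarith

lemma N_vert (hN : IsNormBetween N) (v : ℝ) : N (0, v) = |v| := by
  have h1 := (hN.2.2 (0, v)).1
  have h2 := (hN.2.2 (0, v)).2
  simp only [abs_zero, max_eq_right (abs_nonneg v), zero_add] at h1 h2
  linarith

lemma N_sub_rev (hN : IsNormBetween N) (u v : ℝ × ℝ) : N (u - v) = N (v - u) := by
  rw [← N_neg hN (v - u), neg_sub]

end Nlemmas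

section Geometry

variable {N : ℝ × ℝ → ℝ}

lemma grid_fst (n k : ℕ) : (gridPt n k).1 = (k : ℝ) / 2 ^ n := rfl
lemma grid_snd (n k : ℕ) : (gridPt n k).2 = w n := rfl

/-- the chain point below `gridPt n k` at level `n+i` equals `gridPt (n+i) (k*2^i)` -/
lemma grid_chain_eq (n k i : ℕ) : gridPt (n + i) (k * 2 ^ i) = ((k : ℝ) / 2 ^ n, w (n + i)) := by
  unfold gridPt
  congr 1
  push_cast
  rw [pow_add]
  field_simp

/-- distinct grid points at the same level -/
lemma grid_ne_same_level {n k l : ℕ} (h : k ≠ l) : gridPt n k ≠ gridPt n l := by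
  intro he
  apply h
  have h1 : (k : ℝ) / 2 ^ n = (l : ℝ) / 2 ^ n := congrArg Prod.fst he
  have h2 : (k : ℝ) = l := by
    field_simp at h1
    exact_mod_cast h1
  exact_mod_cast h2

lemma w_strict {m n : ℕ} (h : m < n) : w n < w m := by
  unfold w
  apply one_div_lt_one_div_of_lt (by positivity)
  exact pow_lt_pow_right₀ (by norm_num) h

lemma grid_ne_diff_level {n m k l : ℕ} (h : n ≠ m) : gridPt n k ≠ gridPt m l := by
  intro he
  have h2 : w n = w m := congrArg Prod.snd he
  rcases Nat.lt_or_ge n m with hc | hc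
  · exact absurd h2 (ne_of_gt (w_strict hc))
  · rcases Nat.lt_or_ge m n with hc2 | hc2
    · exact absurd h2 (ne_of_lt (w_strict hc2))
    · exact h (le_antisymm hc2 hc)

lemma grid_ne_seg (n k : ℕ) (t : ℝ) : gridPt n k ≠ segPt t := by
  intro he
  have h2 : w n = 0 := congrArg Prod.snd he
  exact absurd h2 (ne_of_gt (w_pos n))

/-- Isolation: every point of `M` other than `gridPt n k` is at `N`-distance
at least `w (n+1)` from it. -/
lemma isolation (hN : IsNormBetween N) {n k : ℕ} {x : ℝ × ℝ} (hx : x ∈ Mset)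
    (hne : x ≠ gridPt n k) : w (n + 1) ≤ N (gridPt n k - x) := by
  rcases Mset_cases hx with ⟨m, l, hl, rfl⟩ | ⟨t, h0, h1, rfl⟩
  · -- grid point
    rcases lt_trichotomy n m with hnm | hnm | hnm
    · -- m deeper: vertical gap ≥ w n - w m ≥ w (n+1)
      have hsnd : |(gridPt n k - gridPt m l).2| = w n - w m := by
        have : (gridPt n k - gridPt m l).2 = w n - w m := rfl
        rw [this, abs_of_pos]
        have := w_lt_double hnm
        have := w_pos m
        linarith [w_mono (le_of_lt hnm) (m := n) (n := m)]
      have hge := N_snd_le hN (gridPt n k - gridPt m l)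
      rw [hsnd] at hge
      have h12 : w (n+1) = w n / 2 := w_half n
      have hm1 : w m ≤ w (n+1) := w_mono (Nat.succ_le_of_lt hnm)
      linarith
    · -- same level
      subst hnm
      have hkl : k ≠ l := by
        intro h; exact hne (by rw [h])
      have h1' : |(gridPt n k - gridPt n l).1| = |(k : ℝ) - l| / 2 ^ n := by
        have : (gridPt n k - gridPt n l).1 = ((k : ℝ) - l) / 2 ^ n := by
          simp [gridPt, sub_div]
        rw [this, abs_div, abs_of_pos (by positivity : (0:ℝ) < 2 ^ n)]
      have habs : (1 : ℝ) ≤ |(k : ℝ) - l| := by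
        have hz : ((k : ℤ) - l) ≠ 0 := by
          intro hc; exact hkl (by omega)
        have h1 : (1 : ℤ) ≤ |(k : ℤ) - l| := Int.one_le_abs hz
        have h2 : ((|(k : ℤ) - l| : ℤ) : ℝ) = |(k : ℝ) - l| := by
          push_cast
          rfl
        rw [← h2]
        exact_mod_cast h1
      have hge := N_fst_le hN (gridPt n k - gridPt n l)
      rw [h1'] at hge
      have : w n ≤ |(k:ℝ) - l| / 2 ^ n := by
        unfold w
        apply div_le_div_of_nonneg_right ?_ (by positivity)
        · exact habs
      have hw : w (n+1) ≤ w n := w_mono (Nat.le_succ n)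
      linarith
    · -- m shallower (m < n): vertical gap = w m - w n ≥ w n ≥ w (n+1)
      have hsnd : |(gridPt n k - gridPt m l).2| = w m - w n := by
        have h0 : (gridPt n k - gridPt m l).2 = w n - w m := rfl
        rw [h0, abs_sub_comm, abs_of_pos]
        have := w_lt_double hnm
        have := w_pos n
        linarith
      have hge := N_snd_le hN (gridPt n k - gridPt m l)
      rw [hsnd] at hge
      have := w_lt_double hnm
      have hw : w (n+1) ≤ w n := w_mono (Nat.le_succ n)
      linarith
  · -- segment point: vertical gap = w n
    have hsnd : |(gridPt n k - segPt t).2| = w n := by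
      have h0 : (gridPt n k - segPt t).2 = w n - 0 := rfl
      rw [h0, sub_zero, abs_of_pos (w_pos n)]
    have hge := N_snd_le hN (gridPt n k - segPt t)
    rw [hsnd] at hge
    have hw : w (n+1) ≤ w n := w_mono (Nat.le_succ n)
    linarith

end Geometry

section DistFormulas

variable {N : ℝ × ℝ → ℝ}

lemma N_eq_vert (hN : IsNormBetween N) {a b : ℝ × ℝ} (h : a.1 = b.1) :
    N (a - b) = |a.2 - b.2| := by
  have : a - b = ((0 : ℝ), a.2 - b.2) := by
    ext
    · simp [h]
    · rfl
  rw [this, N_vert hN]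

lemma N_eq_horiz (hN : IsNormBetween N) {a b : ℝ × ℝ} (h : a.2 = b.2) :
    N (a - b) = |a.1 - b.1| := by
  have : a - b = (a.1 - b.1, (0 : ℝ)) := by
    ext
    · rfl
    · simp [h]
  rw [this, N_horiz hN]

end DistFormulas

section LipBasics

variable {N : ℝ × ℝ → ℝ} {Y : Type*} [NormedAddCommGroup Y]

/-- the ratio set of `f` -/
def rset (N : ℝ × ℝ → ℝ) (f : ↥Mset → Y) : Set ℝ :=
  {r : ℝ | ∃ p q : ↥Mset, p ≠ q ∧ r = ‖f p - f q‖ / N ((p : ℝ × ℝ) - (q : ℝ × ℝ))}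

lemma lipNM_eq_sSup (f : ↥Mset → Y) : lipNM N f = sSup (rset N f) := rfl

lemma ne_of_val_ne' {p q : ↥Mset} (h : (p : ℝ × ℝ) ≠ (q : ℝ × ℝ)) : p ≠ q :=
  fun he => h (congrArg _ he)

lemma val_ne_of_ne {p q : ↥Mset} (h : p ≠ q) : (p : ℝ × ℝ) ≠ (q : ℝ × ℝ) :=
  fun he => h (Subtype.ext he)

lemma N_pair_pos (hN : IsNormBetween N) {p q : ↥Mset} (h : p ≠ q) :
    0 < N ((p : ℝ × ℝ) - (q : ℝ × ℝ)) :=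
  N_pos hN (sub_ne_zero.mpr (val_ne_of_ne h))

/-- the two endpoints of the bottom segment -/
noncomputable def z0 : ↥Mset := segM 0 le_rfl zero_le_one
noncomputable def z1 : ↥Mset := segM 1 zero_le_one le_rfl

lemma z0_ne_z1 : z0 ≠ z1 := by
  apply ne_of_val_ne'
  intro h
  have : (0 : ℝ) = 1 := congrArg Prod.fst h
  norm_num at this

lemma rset_nonempty (f : ↥Mset → Y) : (rset N f).Nonempty :=
  ⟨_, z0, z1, z0_ne_z1, rfl⟩

lemma rset_bddAbove (hN : IsNormBetween N) {f : ↥Mset → Y} (hf : LipM N f) :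
    BddAbove (rset N f) := by
  obtain ⟨K, hK⟩ := hf
  refine ⟨K, fun r hr => ?_⟩
  obtain ⟨p, q, hpq, rfl⟩ := hr
  rw [div_le_iff₀ (N_pair_pos hN hpq)]
  exact hK p q

lemma ratio_le_lip (hN : IsNormBetween N) {f : ↥Mset → Y} (hf : LipM N f)
    (p q : ↥Mset) : ‖f p - f q‖ ≤ lipNM N f * N ((p : ℝ × ℝ) - (q : ℝ × ℝ)) := by
  by_cases hpq : p = q
  · subst hpq
    simp only [sub_self, norm_zero]
    have hz : N (0 : ℝ × ℝ) = 0 := by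
      have := hN.2.1 0 0
      simpa using this
    rw [hz, mul_zero]
  · have hmem : ‖f p - f q‖ / N ((p : ℝ × ℝ) - (q : ℝ × ℝ)) ∈ rset N f := ⟨p, q, hpq, rfl⟩
    have := le_csSup (rset_bddAbove hN hf) hmem
    rw [div_le_iff₀ (N_pair_pos hN hpq)] at this
    exact this

lemma lip_nonneg (hN : IsNormBetween N) {f : ↥Mset → Y} (hf : LipM N f) :
    0 ≤ lipNM N f := by
  have hmem : ‖f z0 - f z1‖ / N ((z0 : ℝ × ℝ) - (z1 : ℝ × ℝ)) ∈ rset N f :=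
    ⟨z0, z1, z0_ne_z1, rfl⟩
  have h1 := le_csSup (rset_bddAbove hN hf) hmem
  have h2 : 0 ≤ ‖f z0 - f z1‖ / N ((z0 : ℝ × ℝ) - (z1 : ℝ × ℝ)) :=
    div_nonneg (norm_nonneg _) (N_nonneg hN _)
  exact le_trans h2 h1

end LipBasics

section Compactness

lemma mem_box {z : ℝ × ℝ} (hz : z ∈ Mset) :
    0 ≤ z.1 ∧ z.1 ≤ 1 ∧ 0 ≤ z.2 ∧ z.2 ≤ 1 := by
  rcases Mset_cases hz with ⟨n, k, hk, rfl⟩ | ⟨t, h0, h1, rfl⟩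
  · refine ⟨?_, ?_, le_of_lt (w_pos n), w_le_one n⟩
    · rw [grid_fst]; positivity
    · rw [grid_fst, div_le_one (by positivity)]
      exact_mod_cast hk
  · exact ⟨h0, h1, le_rfl, zero_le_one⟩

lemma finite_Aset (n : ℕ) : (Aset n).Finite := by
  have : Aset n = (fun k : ℕ => ((k : ℝ) / 2 ^ n, (1 : ℝ) / 2 ^ n)) '' (Set.Iic (2 ^ n)) := by
    ext z
    constructor
    · rintro ⟨k, hk, rfl⟩; exact ⟨k, hk, rfl⟩
    · rintro ⟨k, hk, rfl⟩; exact ⟨k, hk, rfl⟩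
  rw [this]
  exact (Set.finite_Iic _).image _

lemma isClosed_Mset : IsClosed Mset := by
  rw [← isOpen_compl_iff, Metric.isOpen_iff]
  intro z hz
  rcases lt_trichotomy z.2 0 with h2 | h2 | h2
  · refine ⟨-z.2, by linarith, fun y hy => ?_⟩
    intro hyM
    have hb := (mem_box hyM).2.2.1
    rw [Metric.mem_ball, Prod.dist_eq] at hy
    have : dist y.2 z.2 < -z.2 := lt_of_le_of_lt (le_max_right _ _) hy
    rw [Real.dist_eq] at this
    have : y.2 - z.2 < -z.2 := lt_of_le_of_lt (le_abs_self _) this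
    linarith
  · -- z.2 = 0 but z.1 outside [0,1]
    have h1 : z.1 < 0 ∨ 1 < z.1 := by
      by_contra hc
      push_neg at hc
      exact hz (Or.inr ⟨⟨hc.1, hc.2⟩, h2⟩)
    rcases h1 with h1 | h1
    · refine ⟨-z.1, by linarith, fun y hy => ?_⟩
      intro hyM
      have hb := (mem_box hyM).1
      rw [Metric.mem_ball, Prod.dist_eq] at hy
      have : dist y.1 z.1 < -z.1 := lt_of_le_of_lt (le_max_left _ _) hy
      rw [Real.dist_eq] at this
      have : y.1 - z.1 < -z.1 := lt_of_le_of_lt (le_abs_self _) this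
      linarith
    · refine ⟨z.1 - 1, by linarith, fun y hy => ?_⟩
      intro hyM
      have hb := (mem_box hyM).2.1
      rw [Metric.mem_ball, Prod.dist_eq] at hy
      have : dist y.1 z.1 < z.1 - 1 := lt_of_le_of_lt (le_max_left _ _) hy
      rw [Real.dist_eq, abs_sub_comm] at this
      have : z.1 - y.1 < z.1 - 1 := lt_of_le_of_lt (le_abs_self _) this
      linarith
  · -- z.2 > 0
    obtain ⟨n₀, hn₀⟩ : ∃ n₀ : ℕ, (1/2 : ℝ) ^ n₀ < z.2 / 2 :=
      exists_pow_lt_of_lt_one (by linarith) (by norm_num)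
    set F : Set (ℝ × ℝ) := ⋃ m ∈ Set.Iio n₀, Aset m with hF
    have hFfin : F.Finite := Set.Finite.biUnion (Set.finite_Iio n₀) (fun m _ => finite_Aset m)
    have hFsub : F ⊆ Mset := by
      intro y hy
      rcases Set.mem_iUnion₂.mp hy with ⟨m, _, hm⟩
      exact Or.inl (Set.mem_iUnion.mpr ⟨m, hm⟩)
    have hzF : z ∉ F := fun hc => hz (hFsub hc)
    have hη : ∃ η : ℝ, 0 < η ∧ ∀ y ∈ F, η ≤ dist z y := by
      rcases Set.eq_empty_or_nonempty F with hFe | hFne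
      · exact ⟨1, one_pos, by simp [hFe]⟩
      · refine ⟨Metric.infDist z F, ?_, fun y hy => Metric.infDist_le_dist_of_mem hy⟩
        exact (hFfin.isClosed.notMem_iff_infDist_pos hFne).mp hzF
    obtain ⟨η, hη0, hηle⟩ := hη
    refine ⟨min η (z.2 / 2), by positivity, fun y hy => ?_⟩
    intro hyM
    rw [Metric.mem_ball] at hy
    rcases le_or_gt y.2 (z.2 / 2) with hy2 | hy2
    · have : dist y.2 z.2 < z.2 / 2 :=
        lt_of_le_of_lt (le_max_right _ _) (lt_of_lt_of_le hy (by rw [Prod.dist_eq] at *; exact min_le_right _ _))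
      rw [Real.dist_eq, abs_sub_comm] at this
      have : z.2 - y.2 < z.2 / 2 := lt_of_le_of_lt (le_abs_self _) this
      linarith
    · -- y is a grid point at a shallow level, hence in F
      have hyF : y ∈ F := by
        rcases Mset_cases hyM with ⟨m, l, hl, rfl⟩ | ⟨t, _, _, rfl⟩
        · have hwm : (1/2 : ℝ) ^ m > z.2 / 2 := by
            have : (gridPt m l).2 = w m := rfl
            rw [this] at hy2
            rw [← w_pow]
            exact hy2
          have hmn : m < n₀ := by
            by_contra hc
            push_neg at hc
            have : (1/2 : ℝ) ^ m ≤ (1/2 : ℝ) ^ n₀ := by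
              rw [← w_pow, ← w_pow]
              exact w_mono hc
            linarith
          exact Set.mem_iUnion₂.mpr ⟨m, hmn, ⟨l, hl, rfl⟩⟩
        · have hseg : (segPt t).2 = 0 := rfl
          rw [hseg] at hy2
          linarith
      have h1 := hηle y hyF
      rw [dist_comm] at h1
      have : dist y z < η := lt_of_lt_of_le hy (min_le_left _ _)
      linarith

lemma isCompact_Mset : IsCompact Mset := by
  apply IsCompact.of_isClosed_subset (IsCompact.prod isCompact_Icc isCompact_Icc)
    isClosed_Mset
  intro z hz
  obtain ⟨h1, h2, h3, h4⟩ := mem_box hz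
  exact ⟨⟨h1, h2⟩, ⟨h3, h4⟩⟩

end Compactness

section Continuity

variable {N : ℝ × ℝ → ℝ} {Y : Type*} [NormedAddCommGroup Y]

lemma abs_N_sub_N_le (hN : IsNormBetween N) (a b : ℝ × ℝ) : |N a - N b| ≤ N (a - b) := by
  rw [abs_sub_le_iff]
  constructor
  · have := hN.1 b (a - b)
    simp only [add_sub_cancel] at this
    linarith
  · have := hN.1 a (b - a)
    simp only [add_sub_cancel] at this
    rw [← N_sub_rev hN]
    linarith

lemma l1_le_two_dist (a b : ℝ × ℝ) : |(a - b).1| + |(a - b).2| ≤ 2 * dist a b := by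
  rw [Prod.dist_eq]
  have h1 : |(a - b).1| = dist a.1 b.1 := by rw [Real.dist_eq]; rfl
  have h2 : |(a - b).2| = dist a.2 b.2 := by rw [Real.dist_eq]; rfl
  rw [h1, h2]
  have := le_max_left (dist a.1 b.1) (dist a.2 b.2)
  have := le_max_right (dist a.1 b.1) (dist a.2 b.2)
  linarith

lemma N_continuous (hN : IsNormBetween N) : Continuous N := by
  apply LipschitzWith.continuous (K := 2)
  rw [lipschitzWith_iff_dist_le_mul]
  intro a b
  rw [Real.dist_eq]
  calc |N a - N b| ≤ N (a - b) := abs_N_sub_N_le hN a b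
    _ ≤ |(a - b).1| + |(a - b).2| := N_le_l1 hN _
    _ ≤ 2 * dist a b := l1_le_two_dist a b
    _ = (2 : NNReal) * dist a b := by norm_num

lemma f_continuous (hN : IsNormBetween N) {f : ↥Mset → Y} (hf : LipM N f) :
    Continuous f := by
  obtain ⟨K, hK⟩ := hf
  apply LipschitzWith.continuous (K := Real.toNNReal (2 * |K|))
  rw [lipschitzWith_iff_dist_le_mul]
  intro a b
  have hcoe : (Real.toNNReal (2 * |K|) : ℝ) = 2 * |K| := Real.coe_toNNReal _ (by positivity)
  rw [hcoe, dist_eq_norm]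
  calc ‖f a - f b‖ ≤ K * N ((a : ℝ × ℝ) - (b : ℝ × ℝ)) := hK a b
    _ ≤ |K| * N ((a : ℝ × ℝ) - (b : ℝ × ℝ)) := by
        apply mul_le_mul_of_nonneg_right (le_abs_self K) (N_nonneg hN _)
    _ ≤ |K| * (|((a : ℝ × ℝ) - b).1| + |((a : ℝ × ℝ) - b).2|) := by
        apply mul_le_mul_of_nonneg_left (N_le_l1 hN _) (abs_nonneg K)
    _ ≤ |K| * (2 * dist (a : ℝ × ℝ) (b : ℝ × ℝ)) := by
        apply mul_le_mul_of_nonneg_left (l1_le_two_dist _ _) (abs_nonneg K)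
    _ = 2 * |K| * dist a b := by
        rw [Subtype.dist_eq]
        ring

/-- existence of a maximizer for the ratio from an isolated grid point -/
lemma exists_max_ratio (hN : IsNormBetween N) {f : ↥Mset → Y} (hf : LipM N f)
    {n k : ℕ} (hk : k ≤ 2 ^ n) (c : Y) :
    ∃ xs : ↥Mset, xs ≠ gridM n k hk ∧ ∀ y : ↥Mset, y ≠ gridM n k hk →
      ‖c - f y‖ / N (gridPt n k - (y : ℝ × ℝ)) ≤ ‖c - f xs‖ / N (gridPt n k - (xs : ℝ × ℝ)) := by
  haveI : CompactSpace ↥Mset := isCompact_iff_compactSpace.mp isCompact_Mset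
  set p : ↥Mset := gridM n k hk with hp
  have hopen : IsOpen {y : ↥Mset | y = p} := by
    have heq : {y : ↥Mset | y = p} = Subtype.val ⁻¹' Metric.ball (gridPt n k) (w (n+1) / 2) := by
      ext y
      simp only [Set.mem_setOf_eq, Set.mem_preimage, Metric.mem_ball]
      constructor
      · rintro rfl
        have : dist (p : ℝ × ℝ) (gridPt n k) = 0 := by
          rw [hp]; simp [gridM, dist_self]
        rw [this]
        have := w_pos (n+1)
        linarith
      · intro hdist
        by_contra hne
        have hvne : (y : ℝ × ℝ) ≠ gridPt n k := by
          intro hv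
          exact hne (Subtype.ext hv)
        have hiso := isolation hN y.2 hvne
        have hl1 : N (gridPt n k - (y : ℝ × ℝ)) ≤ 2 * dist (y : ℝ × ℝ) (gridPt n k) := by
          calc N (gridPt n k - (y : ℝ × ℝ)) ≤ _ := N_le_l1 hN _
            _ ≤ 2 * dist (gridPt n k) (y : ℝ × ℝ) := l1_le_two_dist _ _
            _ = 2 * dist (y : ℝ × ℝ) (gridPt n k) := by rw [dist_comm]
        have := w_pos (n+1)
        linarith
    rw [heq]
    exact IsOpen.preimage continuous_subtype_val Metric.isOpen_ball
  have hclosed : IsClosed {y : ↥Mset | y ≠ p} := by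
    have : {y : ↥Mset | y ≠ p} = {y : ↥Mset | y = p}ᶜ := rfl
    rw [this]
    exact isClosed_compl_iff.mpr hopen
  have hcomp : IsCompact {y : ↥Mset | y ≠ p} := hclosed.isCompact
  have hne : {y : ↥Mset | y ≠ p}.Nonempty := by
    refine ⟨z0, ?_⟩
    simp only [Set.mem_setOf_eq]
    intro hc
    have : (z0 : ℝ × ℝ).2 = (p : ℝ × ℝ).2 := by rw [hc]
    have h0 : (z0 : ℝ × ℝ).2 = 0 := rfl
    have h1 : (p : ℝ × ℝ).2 = w n := rfl
    rw [h0, h1] at this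
    exact absurd this.symm (ne_of_gt (w_pos n))
  have hcont : ContinuousOn
      (fun y : ↥Mset => ‖c - f y‖ / N (gridPt n k - (y : ℝ × ℝ))) {y : ↥Mset | y ≠ p} := by
    apply ContinuousOn.div
    · exact ((continuous_const.sub (f_continuous hN hf)).norm).continuousOn
    · exact ((N_continuous hN).comp (continuous_const.sub continuous_subtype_val)).continuousOn
    · intro y hy
      have hvne : gridPt n k - (y : ℝ × ℝ) ≠ 0 := by
        rw [sub_ne_zero]
        intro hv
        exact hy (Subtype.ext hv.symm)
      exact ne_of_gt (N_pos hN hvne)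
  obtain ⟨xs, hxs, hmax⟩ := hcomp.exists_isMaxOn hne hcont
  exact ⟨xs, hxs, fun y hy => hmax hy⟩

end Continuity

section CaseB

variable {N : ℝ × ℝ → ℝ} {Y : Type*} [NormedAddCommGroup Y] [NormedSpace ℝ Y]

lemma seg_ne_grid (t : ℝ) (h0 : 0 ≤ t) (h1 : t ≤ 1) {n k : ℕ} (hk : k ≤ 2 ^ n) :
    segM t h0 h1 ≠ gridM n k hk := by
  intro hc
  have : (segPt t).2 = (gridPt n k).2 := by
    have := congrArg (fun y : ↥Mset => (y : ℝ × ℝ).2) hc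
    exact this
  have h2 : (0 : ℝ) = w n := this
  exact absurd h2.symm (ne_of_gt (w_pos n))

lemma caseB (hN : IsNormBetween N) {f : ↥Mset → Y} (hf : LipM N f) {ε : ℝ} (hε : 0 < ε)
    {n k : ℕ} (hk : k ≤ 2 ^ n) (xh : ↥Mset) (hne : xh ≠ gridM n k hk)
    (hstar : lipNM N f * N (gridPt n k - (xh : ℝ × ℝ)) ≤
      ‖f (gridM n k hk) - f xh‖ + ε / 2 * w (n + 1))
    (hL : ε < lipNM N f) :
    ∃ g : ↥Mset → Y, LipM N g ∧ SNAM N g ∧ lipNM N (fun p => f p - g p) ≤ ε := by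
  classical
  set L := lipNM N f with hLdef
  set p : ↥Mset := gridM n k hk with hp
  have hpval : (p : ℝ × ℝ) = gridPt n k := rfl
  set a : ℝ := ε / 2 * w (n + 1) with ha
  have ha0 : 0 < a := by
    have := w_pos (n + 1)
    positivity
  have hxhval : (xh : ℝ × ℝ) ≠ gridPt n k := by
    intro hc; exact hne (Subtype.ext hc)
  have hdpos : 0 < N (gridPt n k - (xh : ℝ × ℝ)) :=
    N_pos hN (sub_ne_zero.mpr (fun hc => hxhval hc.symm))
  have hiso := isolation hN xh.2 hxhval
  have haN : a ≤ ε / 2 * N (gridPt n k - (xh : ℝ × ℝ)) := by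
    rw [ha]
    apply mul_le_mul_of_nonneg_left hiso (by linarith)
  -- the difference vector
  set wv : Y := f p - f xh with hwv
  have hwvnorm : (L - ε / 2) * N (gridPt n k - (xh : ℝ × ℝ)) ≤ ‖wv‖ := by
    nlinarith [hstar, haN, hdpos]
  have hwvpos : 0 < ‖wv‖ := by
    have h1 : 0 < (L - ε / 2) * N (gridPt n k - (xh : ℝ × ℝ)) := by
      apply mul_pos (by linarith) hdpos
    linarith
  set u : Y := ‖wv‖⁻¹ • wv with hu
  have hunorm : ‖u‖ = 1 := by
    rw [hu, norm_smul, norm_inv, norm_norm, inv_mul_cancel₀ (ne_of_gt hwvpos)]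
  have hwvu : wv + a • u = (‖wv‖ + a) • u := by
    have h0 : (‖wv‖ + a) • u = wv + a • u := by
      rw [add_smul]
      congr 1
      rw [hu, smul_smul, mul_inv_cancel₀ (ne_of_gt hwvpos), one_smul]
    exact h0.symm
  set c : Y := f p + a • u with hc
  set g : ↥Mset → Y := fun y => if y = p then c else f y with hg
  have hgp : g p = c := by rw [hg]; simp
  have hgy : ∀ y : ↥Mset, y ≠ p → g y = f y := by
    intro y hy
    rw [hg]
    simp [hy]
  have hkey : ∀ y : ↥Mset, ‖c - f y‖ ≤ ‖f p - f y‖ + a := by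
    intro y
    have : c - f y = (f p - f y) + a • u := by rw [hc]; abel
    rw [this]
    calc ‖(f p - f y) + a • u‖ ≤ ‖f p - f y‖ + ‖a • u‖ := norm_add_le _ _
      _ = ‖f p - f y‖ + a := by rw [norm_smul, hunorm, mul_one, Real.norm_eq_abs,
        abs_of_pos ha0]
  have hcxh : ‖c - f xh‖ = ‖wv‖ + a := by
    have h1 : c - f xh = wv + a • u := by rw [hc, hwv]; abel
    rw [h1, hwvu, norm_smul, hunorm, mul_one, Real.norm_eq_abs, abs_of_pos (by positivity)]
  -- maximizer
  obtain ⟨xs, hxs, hmax⟩ := exists_max_ratio hN hf hk c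
  set R : ℝ := ‖c - f xs‖ / N (gridPt n k - (xs : ℝ × ℝ)) with hR
  have hLR : L ≤ R := by
    have h1 : L ≤ ‖c - f xh‖ / N (gridPt n k - (xh : ℝ × ℝ)) := by
      rw [le_div_iff₀ hdpos, hcxh]
      calc L * N (gridPt n k - (xh : ℝ × ℝ)) ≤ ‖f p - f xh‖ + a := hstar
        _ = ‖wv‖ + a := by rw [hwv]
    exact le_trans h1 (hmax xh hne)
  have hxsval : (xs : ℝ × ℝ) ≠ gridPt n k := fun hc => hxs (Subtype.ext hc)
  have hdxs : 0 < N (gridPt n k - (xs : ℝ × ℝ)) :=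
    N_pos hN (sub_ne_zero.mpr (fun hc => hxsval hc.symm))
  -- ratios of f are bounded by L
  have hfratio : ∀ y z : ↥Mset, y ≠ z → ‖f y - f z‖ / N ((y : ℝ × ℝ) - (z : ℝ × ℝ)) ≤ L :=
    fun y z hyz => le_csSup (rset_bddAbove hN hf) ⟨y, z, hyz, rfl⟩
  -- the ratio set of g has supremum R, attained at (p, xs)
  have hub : ∀ r ∈ rset N g, r ≤ R := by
    rintro r ⟨y, z, hyz, rfl⟩
    by_cases hy : y = p
    · subst hy
      have hz : z ≠ p := fun hc => hyz hc.symm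
      rw [hgp, hgy z hz, hpval]
      exact hmax z hz
    · by_cases hz : z = p
      · subst hz
        rw [hgy y hy, hgp]
        have h1 : ‖f y - c‖ / N ((y : ℝ × ℝ) - (p : ℝ × ℝ))
            = ‖c - f y‖ / N (gridPt n k - (y : ℝ × ℝ)) := by
          rw [norm_sub_rev, N_sub_rev hN, hpval]
        rw [h1]
        exact hmax y hy
      · rw [hgy y hy, hgy z hz]
        exact le_trans (hfratio y z hyz) hLR
  have hmem : R ∈ rset N g := by
    refine ⟨p, xs, fun hc => hxs hc.symm, ?_⟩
    rw [hgp, hgy xs hxs, hR, hpval]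
  have hsup : lipNM N g = R := le_antisymm (csSup_le ⟨R, hmem⟩ hub) (le_csSup ⟨R, hub⟩ hmem)
  refine ⟨g, ?_, ?_, ?_⟩
  · -- LipM
    obtain ⟨K, hK⟩ := hf
    refine ⟨|K| + ε, fun y z => ?_⟩
    have hNnn := N_nonneg hN ((y : ℝ × ℝ) - (z : ℝ × ℝ))
    have hbase : ‖f y - f z‖ ≤ |K| * N ((y : ℝ × ℝ) - (z : ℝ × ℝ)) :=
      le_trans (hK y z) (mul_le_mul_of_nonneg_right (le_abs_self K) hNnn)
    by_cases hy : y = p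
    · subst hy
      by_cases hz : z = p
      · subst hz
        simp only [sub_self, norm_zero]
        rw [N_zero hN, mul_zero]
      · rw [hgp, hgy z hz]
        have h2 : a ≤ (ε / 2) * N ((p : ℝ × ℝ) - (z : ℝ × ℝ)) := by
          rw [ha]
          apply mul_le_mul_of_nonneg_left ?_ (by linarith)
          exact isolation hN z.2 (fun hc => hz (Subtype.ext hc))
        calc ‖c - f z‖ ≤ ‖f p - f z‖ + a := hkey z
          _ ≤ |K| * N ((p : ℝ × ℝ) - (z : ℝ × ℝ)) + (ε / 2) * N ((p : ℝ × ℝ) - (z : ℝ × ℝ)) := by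
              have := hK p z
              have h3 : ‖f p - f z‖ ≤ |K| * N ((p : ℝ × ℝ) - (z : ℝ × ℝ)) :=
                le_trans this (mul_le_mul_of_nonneg_right (le_abs_self K) (N_nonneg hN _))
              linarith
          _ ≤ (|K| + ε) * N ((p : ℝ × ℝ) - (z : ℝ × ℝ)) := by
              have := N_nonneg hN ((p : ℝ × ℝ) - (z : ℝ × ℝ))
              nlinarith
    · by_cases hz : z = p
      · subst hz
        rw [hgy y hy, hgp]
        have h2 : a ≤ (ε / 2) * N ((y : ℝ × ℝ) - (p : ℝ × ℝ)) := by
          rw [ha]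
          apply mul_le_mul_of_nonneg_left ?_ (by linarith)
          rw [← N_sub_rev hN]
          exact isolation hN y.2 (fun hc => hy (Subtype.ext hc))
        have h1 : ‖f y - c‖ = ‖c - f y‖ := norm_sub_rev _ _
        rw [h1]
        calc ‖c - f y‖ ≤ ‖f p - f y‖ + a := hkey y
          _ ≤ |K| * N ((y : ℝ × ℝ) - (p : ℝ × ℝ)) + (ε / 2) * N ((y : ℝ × ℝ) - (p : ℝ × ℝ)) := by
              have h3 : ‖f p - f y‖ ≤ |K| * N ((p : ℝ × ℝ) - (y : ℝ × ℝ)) :=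
                le_trans (hK p y) (mul_le_mul_of_nonneg_right (le_abs_self K) (N_nonneg hN _))
              rw [N_sub_rev hN] at h3
              linarith
          _ ≤ (|K| + ε) * N ((y : ℝ × ℝ) - (p : ℝ × ℝ)) := by
              have := N_nonneg hN ((y : ℝ × ℝ) - (p : ℝ × ℝ))
              nlinarith
      · rw [hgy y hy, hgy z hz]
        calc ‖f y - f z‖ ≤ |K| * N ((y : ℝ × ℝ) - (z : ℝ × ℝ)) := hbase
          _ ≤ (|K| + ε) * N ((y : ℝ × ℝ) - (z : ℝ × ℝ)) := by nlinarith
  · -- SNAM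
    refine ⟨p, xs, fun hc => hxs hc.symm, ?_⟩
    rw [hsup, hgp, hgy xs hxs, hpval, hR]
    exact (div_mul_cancel₀ _ (ne_of_gt hdxs)).symm
  · -- distance to f
    apply csSup_le
    · refine ⟨‖(fun y => f y - g y) z0 - (fun y => f y - g y) z1‖ /
        N ((z0 : ℝ × ℝ) - (z1 : ℝ × ℝ)), z0, z1, z0_ne_z1, rfl⟩
    · rintro r ⟨y, z, hyz, rfl⟩
      have hz0 : ∀ (q : ↥Mset), q ≠ p → f q - g q = 0 := by
        intro q hq
        rw [hgy q hq, sub_self]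
      have hcp : f p - g p = -(a • u) := by
        rw [hgp, hc]
        abel
      by_cases hy : y = p
      · subst hy
        have hz : z ≠ p := fun hc => hyz (by rw [hc])
        simp only [hcp, hz0 z hz, sub_zero, norm_neg, norm_smul, hunorm, mul_one,
          Real.norm_eq_abs, abs_of_pos ha0]
        rw [div_le_iff₀ (N_pair_pos hN hyz)]
        have hisoz : w (n+1) ≤ N ((p : ℝ × ℝ) - (z : ℝ × ℝ)) := by
          exact isolation hN z.2 (fun hcc => hz (Subtype.ext hcc))
        calc a = ε / 2 * w (n+1) := ha
          _ ≤ ε / 2 * N ((p : ℝ × ℝ) - (z : ℝ × ℝ)) :=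
              mul_le_mul_of_nonneg_left hisoz (by linarith)
          _ ≤ ε * N ((p : ℝ × ℝ) - (z : ℝ × ℝ)) := by
              have := le_trans (le_of_lt (w_pos (n+1))) hisoz
              nlinarith
      · by_cases hz : z = p
        · subst hz
          simp only [hcp, hz0 y hy, zero_sub, norm_neg, norm_smul, hunorm, mul_one,
            Real.norm_eq_abs, abs_of_pos ha0]
          rw [div_le_iff₀ (N_pair_pos hN hyz)]
          have hisoy : w (n+1) ≤ N ((y : ℝ × ℝ) - (p : ℝ × ℝ)) := by
            rw [← N_sub_rev hN]
            exact isolation hN y.2 (fun hcc => hy (Subtype.ext hcc))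
          calc a = ε / 2 * w (n+1) := ha
            _ ≤ ε / 2 * N ((y : ℝ × ℝ) - (p : ℝ × ℝ)) :=
                mul_le_mul_of_nonneg_left hisoy (by linarith)
            _ ≤ ε * N ((y : ℝ × ℝ) - (p : ℝ × ℝ)) := by
                have := le_trans (le_of_lt (w_pos (n+1))) hisoy
                nlinarith
        · simp only [hz0 y hy, hz0 z hz, sub_zero, norm_zero, zero_div]
          exact le_of_lt hε

end CaseB

section CaseC

variable {N : ℝ × ℝ → ℝ} {Y : Type*} [NormedAddCommGroup Y]

/-- limit helper -/
lemma le_of_le_add_wm {x y C : ℝ} (h : ∀ m : ℕ, x ≤ y + C * w m) : x ≤ y := by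
  apply le_of_forall_pos_le_add
  intro δ hδ
  have hC1 : (0:ℝ) < |C| + 1 := by positivity
  obtain ⟨m, hm⟩ := exists_pow_lt_of_lt_one (div_pos hδ hC1) (by norm_num : (1/2:ℝ) < 1)
  have hw : w m = (1/2 : ℝ) ^ m := w_pow m
  have h1 : C * w m ≤ (|C| + 1) * (1/2 : ℝ) ^ m := by
    rw [← hw]
    have := w_pos m
    nlinarith [le_abs_self C, abs_nonneg C]
  have h2 : (|C| + 1) * (1/2 : ℝ) ^ m < δ := by
    rw [lt_div_iff₀ hC1] at hm
    linarith [mul_comm (|C| + 1) ((1/2:ℝ)^m)]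
  linarith [h m]

/-- The hypothesis of Case C : no grid point admits an `ε/2 · r_p`-good partner. -/
def NoStar (N : ℝ × ℝ → ℝ) (f : ↥Mset → Y) (ε : ℝ) : Prop :=
  ∀ (n k : ℕ) (hk : k ≤ 2 ^ n) (x : ↥Mset), (x : ℝ × ℝ) ≠ gridPt n k →
    ‖f (gridM n k hk) - f x‖ + ε / 2 * w (n + 1) < lipNM N f * N (gridPt n k - (x : ℝ × ℝ))

variable (hN : IsNormBetween N) {f : ↥Mset → Y} {ε : ℝ}

/-- membership bound for chain points -/
lemma chain_le {n k : ℕ} (hk : k ≤ 2 ^ n) (i : ℕ) : k * 2 ^ i ≤ 2 ^ (n + i) := by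
  rw [pow_add]
  exact Nat.mul_le_mul_right _ hk

/-- Chain estimate: going down from a grid point to its base point on the segment. -/
lemma chain_bound (hN : IsNormBetween N) (hf : LipM N f) (hS : NoStar N f ε)
    (hε : 0 < ε) (hL : ε < lipNM N f)
    {n k : ℕ} (hk : k ≤ 2 ^ n) (h0 : 0 ≤ (k : ℝ) / 2 ^ n) (h1 : (k : ℝ) / 2 ^ n ≤ 1) :
    ‖f (gridM n k hk) - f (segM ((k : ℝ) / 2 ^ n) h0 h1)‖ ≤ (lipNM N f - ε / 2) * w n := by
  classical
  set L := lipNM N f with hLdef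
  have hL2 : 0 < L - ε / 2 := by linarith
  set cpt : ℕ → ↥Mset := fun i => ⟨gridPt (n + i) (k * 2 ^ i), gridPt_mem (chain_le hk i)⟩
    with hcpt
  have hcfst : ∀ i, ((cpt i : ℝ × ℝ)).1 = (k : ℝ) / 2 ^ n := by
    intro i
    have := grid_chain_eq n k i
    rw [show ((cpt i : ℝ × ℝ)) = gridPt (n + i) (k * 2 ^ i) from rfl, this]
  have hcsnd : ∀ i, ((cpt i : ℝ × ℝ)).2 = w (n + i) := fun i => rfl
  -- single step
  have hstep : ∀ i, ‖f (cpt i) - f (cpt (i + 1))‖ ≤ (L - ε / 2) * w (n + i + 1) := by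
    intro i
    have hnei : ((cpt (i+1) : ℝ × ℝ)) ≠ gridPt (n + i) (k * 2 ^ i) := by
      show gridPt (n + (i+1)) (k * 2 ^ (i+1)) ≠ gridPt (n + i) (k * 2 ^ i)
      exact grid_ne_diff_level (by omega)
    have hdist : N (gridPt (n + i) (k * 2 ^ i) - ((cpt (i+1) : ℝ × ℝ))) = w (n + i + 1) := by
      rw [N_eq_vert hN]
      · have e1 : (gridPt (n + i) (k * 2 ^ i)).2 = w (n + i) := rfl
        have e2 : ((cpt (i+1) : ℝ × ℝ)).2 = w (n + (i+1)) := rfl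
        rw [e1, e2]
        have : w (n + (i + 1)) = w (n + i) / 2 := w_half (n + i)
        rw [this]
        have := w_pos (n + i)
        rw [abs_of_pos (by linarith)]
        have : w (n + i + 1) = w (n + i) / 2 := w_half (n + i)
        rw [this]
        ring
      · have e1 : (gridPt (n + i) (k * 2 ^ i)).1 = ((k * 2 ^ i : ℕ) : ℝ) / 2 ^ (n + i) := rfl
        rw [e1, hcfst (i+1)]
        have := grid_chain_eq n k i
        have e2 : ((k * 2 ^ i : ℕ) : ℝ) / 2 ^ (n + i) = (k : ℝ) / 2 ^ n := by
          have := congrArg Prod.fst this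
          exact this
        rw [e2]
    have happ := hS (n + i) (k * 2 ^ i) (chain_le hk i) (cpt (i + 1)) hnei
    rw [hdist] at happ
    have hgm : gridM (n + i) (k * 2 ^ i) (chain_le hk i) = cpt i := rfl
    rw [hgm] at happ
    have hwh : w (n + i + 1 + 1) = w (n + i + 1) / 2 := w_half _
    -- happ : ‖f (cpt i) - f (cpt (i+1))‖ + ε/2 * w (n+i+1+1) < L * w (n+i+1)
    have := w_pos (n + i + 1 + 1)
    nlinarith [happ]
  -- telescoping
  have htel : ∀ I : ℕ, ‖f (cpt 0) - f (cpt I)‖ ≤ (L - ε / 2) * (w n - w (n + I)) := by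
    intro I
    induction I with
    | zero =>
      simp only [sub_self, norm_zero, Nat.add_zero]
      simp
    | succ I ih =>
      have htri : ‖f (cpt 0) - f (cpt (I + 1))‖ ≤
          ‖f (cpt 0) - f (cpt I)‖ + ‖f (cpt I) - f (cpt (I + 1))‖ := by
        have := norm_sub_le_norm_sub_add_norm_sub (f (cpt 0)) (f (cpt I)) (f (cpt (I+1)))
        exact this
      have hwh : w (n + I) = 2 * w (n + I + 1) := by
        have := w_half (n + I); linarith
      have hstepI := hstep I
      have : w (n + (I + 1)) = w (n + I + 1) := rfl
      rw [this]
      calc ‖f (cpt 0) - f (cpt (I + 1))‖ ≤ _ := htri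
        _ ≤ (L - ε/2) * (w n - w (n + I)) + (L - ε/2) * w (n + I + 1) := by
            apply add_le_add ih hstepI
        _ = (L - ε/2) * (w n - w (n + I + 1)) := by rw [hwh]; ring
  -- pass to the limit
  obtain ⟨K, hK⟩ := hf
  have hc0 : cpt 0 = gridM n k hk := by
    apply Subtype.ext
    show gridPt (n + 0) (k * 2 ^ 0) = gridPt n k
    norm_num [gridPt]
  set pb : ↥Mset := segM ((k : ℝ) / 2 ^ n) h0 h1 with hpb
  have hbase : ∀ I, ‖f (cpt I) - f pb‖ ≤ |K| * w (n + I) := by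
    intro I
    have hdist : N ((cpt I : ℝ × ℝ) - (pb : ℝ × ℝ)) = w (n + I) := by
      rw [N_eq_vert hN]
      · have e1 : ((cpt I : ℝ × ℝ)).2 = w (n + I) := rfl
        have e2 : ((pb : ℝ × ℝ)).2 = 0 := rfl
        rw [e1, e2, sub_zero, abs_of_pos (w_pos _)]
      · rw [hcfst I]
        rfl
    calc ‖f (cpt I) - f pb‖ ≤ K * N ((cpt I : ℝ × ℝ) - (pb : ℝ × ℝ)) := hK _ _
      _ ≤ |K| * N ((cpt I : ℝ × ℝ) - (pb : ℝ × ℝ)) :=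
          mul_le_mul_of_nonneg_right (le_abs_self K) (N_nonneg hN _)
      _ = |K| * w (n + I) := by rw [hdist]
  rw [← hc0]
  have hbnd : ∀ I : ℕ, ‖f (cpt 0) - f pb‖ ≤ (L - ε/2) * w n + (|K| + L) * w (n + I) := by
    intro I
    have h3 : ‖f (cpt 0) - f pb‖ ≤ ‖f (cpt 0) - f (cpt I)‖ + ‖f (cpt I) - f pb‖ :=
      norm_sub_le_norm_sub_add_norm_sub _ _ _
    have h4 := htel I
    have h5 := hbase I
    have h6 : (L - ε/2) * (w n - w (n + I)) ≤ (L - ε/2) * w n := by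
      have := w_pos (n + I)
      nlinarith
    have h7 : |K| * w (n + I) ≤ (|K| + L) * w (n + I) := by
      have := w_pos (n + I)
      have hL0 : 0 ≤ L := by linarith
      nlinarith
    linarith
  -- now ∀ m : x ≤ y + C * w m with m := n + I ; reindex
  apply le_of_le_add_wm (C := |K| + L)
  intro m
  calc ‖f (cpt 0) - f pb‖ ≤ (L - ε/2) * w n + (|K| + L) * w (n + m) := hbnd m
    _ ≤ (L - ε/2) * w n + (|K| + L) * w m := by
        have hmono : w (n + m) ≤ w m := w_mono (by omega)
        have hKL : 0 ≤ |K| + L := by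
          have : (0:ℝ) < L := lt_trans hε hL
          have := abs_nonneg K
          linarith
        nlinarith

/-- Horizontal telescoping along one level. -/
lemma level_bound (hN : IsNormBetween N) (hS : NoStar N f ε)
    (hε : 0 < ε) (hL : ε < lipNM N f)
    (m : ℕ) : ∀ (j k : ℕ) (h : k + j ≤ 2 ^ m),
    ‖f (gridM m k (le_trans (Nat.le_add_right k j) h)) - f (gridM m (k + j) h)‖ ≤
      (lipNM N f - ε / 4) * ((j : ℝ) * w m) := by
  set L := lipNM N f with hLdef
  intro j
  induction j with
  | zero =>
    intro k h
    simp only [Nat.add_zero, sub_self, norm_zero, Nat.cast_zero, zero_mul, mul_zero, le_refl]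
  | succ j ih =>
    intro k h
    have h' : k + j ≤ 2 ^ m := by omega
    have hstep : ‖f (gridM m (k + j) h') - f (gridM m (k + j + 1) (by omega))‖ ≤
        (L - ε / 4) * w m := by
      have hnei : ((gridM m (k + j + 1) (by omega : k + j + 1 ≤ 2 ^ m) : ℝ × ℝ)) ≠
          gridPt m (k + j) := by
        show gridPt m (k + j + 1) ≠ gridPt m (k + j)
        exact grid_ne_same_level (by omega)
      have happ := hS m (k + j) h' (gridM m (k + j + 1) (by omega)) hnei
      have hdist : N (gridPt m (k + j) -
          ((gridM m (k + j + 1) (by omega : k + j + 1 ≤ 2 ^ m) : ℝ × ℝ))) = w m := by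
        rw [N_eq_horiz hN]
        · show |((k + j : ℕ) : ℝ) / 2 ^ m - ((k + j + 1 : ℕ) : ℝ) / 2 ^ m| = w m
          rw [div_sub_div_same]
          push_cast
          rw [show ((k : ℝ) + j - (k + j + 1)) = -1 by ring]
          rw [abs_div, abs_neg, abs_one, abs_of_pos (by positivity : (0:ℝ) < 2 ^ m)]
          rfl
        · rfl
      rw [hdist] at happ
      have hwh : w (m + 1) = w m / 2 := w_half m
      have := w_pos (m + 1)
      nlinarith [happ]
    have htri := norm_sub_le_norm_sub_add_norm_sub
      (f (gridM m k (le_trans (Nat.le_add_right k (j+1)) h)))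
      (f (gridM m (k + j) h')) (f (gridM m (k + j + 1) h))
    have ihk : ‖f (gridM m k (le_trans (Nat.le_add_right k (j+1)) h)) -
        f (gridM m (k + j) h')‖ ≤ (L - ε / 4) * ((j : ℝ) * w m) := ih k h'
    have hfin := le_trans htri (add_le_add ihk hstep)
    have heq : (L - ε/4) * ((j:ℝ) * w m) + (L - ε/4) * w m
        = (L - ε/4) * (((j + 1 : ℕ) : ℝ) * w m) := by push_cast; ring
    show ‖f (gridM m k (le_trans (Nat.le_add_right k (j+1)) h)) -
        f (gridM m (k + j + 1) h)‖ ≤ (L - ε / 4) * (((j + 1 : ℕ) : ℝ) * w m)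
    rw [← heq]
    exact hfin

/-- Segment estimate (ordered version) -/
lemma seg_bound_le (hN : IsNormBetween N) (hf : LipM N f) (hS : NoStar N f ε)
    (hε : 0 < ε) (hL : ε < lipNM N f)
    {t s : ℝ} (ht0 : 0 ≤ t) (hs1 : s ≤ 1) (hts : t ≤ s) :
    ‖f (segM t ht0 (le_trans hts hs1)) - f (segM s (le_trans ht0 hts) hs1)‖ ≤
      (lipNM N f - ε / 4) * (s - t) := by
  classical
  set L := lipNM N f with hLdef
  obtain ⟨K, hK⟩ := hf
  have ht1 : t ≤ 1 := le_trans hts hs1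
  have hs0 : 0 ≤ s := le_trans ht0 hts
  apply le_of_le_add_wm (C := 4 * |K| + 2 * L)
  intro m
  have hwm := w_pos m
  have h2m : (0:ℝ) < 2 ^ m := by positivity
  -- rounding
  set k : ℕ := ⌊t * 2 ^ m + 1/2⌋₊ with hkdef
  set l : ℕ := ⌊s * 2 ^ m + 1/2⌋₊ with hldef
  have hkle : (k : ℝ) ≤ t * 2 ^ m + 1/2 := Nat.floor_le (by positivity)
  have hkgt : t * 2 ^ m + 1/2 < k + 1 := Nat.lt_floor_add_one _
  have hlle : (l : ℝ) ≤ s * 2 ^ m + 1/2 := Nat.floor_le (by positivity)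
  have hlgt : s * 2 ^ m + 1/2 < l + 1 := Nat.lt_floor_add_one _
  have hkl : k ≤ l := Nat.floor_le_floor (by nlinarith)
  have hl2m : l ≤ 2 ^ m := by
    have : (l : ℝ) < 2 ^ m + 1 := by nlinarith
    have h2 : (l : ℝ) < ((2 ^ m + 1 : ℕ) : ℝ) := by push_cast; linarith
    exact_mod_cast Nat.lt_succ_iff.mp (by exact_mod_cast h2)
  have hk2m : k ≤ 2 ^ m := le_trans hkl hl2m
  -- lift distances
  have hliftT : ‖f (segM t ht0 ht1) - f (gridM m k hk2m)‖ ≤ |K| * (2 * w m) := by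
    have hdd : N ((segPt t) - gridPt m k) ≤ 2 * w m := by
      have h1 := N_le_l1 hN ((segPt t) - gridPt m k)
      have e1 : ((segPt t) - gridPt m k).1 = t - (k : ℝ) / 2 ^ m := rfl
      have e2 : ((segPt t) - gridPt m k).2 = 0 - w m := rfl
      rw [e1, e2] at h1
      have habs1 : |t - (k : ℝ) / 2 ^ m| ≤ w m := by
        have hwm2 : w m * 2 ^ m = 1 := by unfold w; field_simp
        have hkrm : (k:ℝ)/2^m * 2^m = (k:ℝ) := div_mul_cancel₀ _ (ne_of_gt h2m)
        rw [abs_le]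
        constructor
        · nlinarith [hkle, hwm2, hkrm, h2m]
        · nlinarith [hkgt, hwm2, hkrm, h2m]
      have habs2 : |(0:ℝ) - w m| = w m := by
        rw [zero_sub, abs_neg, abs_of_pos hwm]
      rw [habs2] at h1
      linarith
    calc ‖f (segM t ht0 ht1) - f (gridM m k hk2m)‖ ≤
        K * N (((segM t ht0 ht1) : ℝ × ℝ) - ((gridM m k hk2m) : ℝ × ℝ)) := hK _ _
      _ ≤ |K| * N ((segPt t) - gridPt m k) :=
          mul_le_mul_of_nonneg_right (le_abs_self K) (N_nonneg hN _)
      _ ≤ |K| * (2 * w m) := mul_le_mul_of_nonneg_left hdd (abs_nonneg K)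
  have hliftS : ‖f (segM s hs0 hs1) - f (gridM m l hl2m)‖ ≤ |K| * (2 * w m) := by
    have hdd : N ((segPt s) - gridPt m l) ≤ 2 * w m := by
      have h1 := N_le_l1 hN ((segPt s) - gridPt m l)
      have e1 : ((segPt s) - gridPt m l).1 = s - (l : ℝ) / 2 ^ m := rfl
      have e2 : ((segPt s) - gridPt m l).2 = 0 - w m := rfl
      rw [e1, e2] at h1
      have habs1 : |s - (l : ℝ) / 2 ^ m| ≤ w m := by
        have hwm2 : w m * 2 ^ m = 1 := by unfold w; field_simp
        have hlrm : (l:ℝ)/2^m * 2^m = (l:ℝ) := div_mul_cancel₀ _ (ne_of_gt h2m)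
        rw [abs_le]
        constructor
        · nlinarith [hlle, hwm2, hlrm, h2m]
        · nlinarith [hlgt, hwm2, hlrm, h2m]
      have habs2 : |(0:ℝ) - w m| = w m := by
        rw [zero_sub, abs_neg, abs_of_pos hwm]
      rw [habs2] at h1
      linarith
    calc ‖f (segM s hs0 hs1) - f (gridM m l hl2m)‖ ≤
        K * N (((segM s hs0 hs1) : ℝ × ℝ) - ((gridM m l hl2m) : ℝ × ℝ)) := hK _ _
      _ ≤ |K| * N ((segPt s) - gridPt m l) :=
          mul_le_mul_of_nonneg_right (le_abs_self K) (N_nonneg hN _)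
      _ ≤ |K| * (2 * w m) := mul_le_mul_of_nonneg_left hdd (abs_nonneg K)
  -- middle bound
  have hmid : ‖f (gridM m k hk2m) - f (gridM m l hl2m)‖ ≤
      (L - ε / 4) * (((l - k : ℕ) : ℝ) * w m) := by
    have h := level_bound hN hS hε hL m (l - k) k (by omega)
    have hgml : gridM m (k + (l - k)) (by omega : k + (l - k) ≤ 2 ^ m) = gridM m l hl2m := by
      apply Subtype.ext
      show gridPt m (k + (l - k)) = gridPt m l
      congr 1
      omega
    rw [hgml] at h
    exact h
  have hlk : ((l - k : ℕ) : ℝ) * w m ≤ (s - t) + 2 * w m := by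
    have hcast : ((l - k : ℕ) : ℝ) = (l : ℝ) - (k : ℝ) := by
      push_cast [Nat.cast_sub hkl]
      ring
    rw [hcast]
    have hwm2 : w m * 2 ^ m = 1 := by unfold w; field_simp
    have h1 : (l : ℝ) - k ≤ (s - t) * 2 ^ m + 1 := by nlinarith
    nlinarith
  have hLe4 : 0 ≤ L - ε / 4 := by linarith
  -- combine
  have htri : ‖f (segM t ht0 ht1) - f (segM s hs0 hs1)‖ ≤
      ‖f (segM t ht0 ht1) - f (gridM m k hk2m)‖ +
      ‖f (gridM m k hk2m) - f (gridM m l hl2m)‖ +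
      ‖f (gridM m l hl2m) - f (segM s hs0 hs1)‖ := by
    have h1 := norm_sub_le_norm_sub_add_norm_sub (f (segM t ht0 ht1))
      (f (gridM m k hk2m)) (f (segM s hs0 hs1))
    have h2 := norm_sub_le_norm_sub_add_norm_sub (f (gridM m k hk2m))
      (f (gridM m l hl2m)) (f (segM s hs0 hs1))
    linarith
  have hsym : ‖f (gridM m l hl2m) - f (segM s hs0 hs1)‖ =
      ‖f (segM s hs0 hs1) - f (gridM m l hl2m)‖ := norm_sub_rev _ _
  have hmid2 : ‖f (gridM m k hk2m) - f (gridM m l hl2m)‖ ≤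
      (L - ε / 4) * (s - t) + (L - ε/4) * (2 * w m) := by
    calc ‖f (gridM m k hk2m) - f (gridM m l hl2m)‖ ≤
        (L - ε / 4) * (((l - k : ℕ) : ℝ) * w m) := hmid
      _ ≤ (L - ε / 4) * ((s - t) + 2 * w m) := mul_le_mul_of_nonneg_left hlk hLe4
      _ = (L - ε / 4) * (s - t) + (L - ε/4) * (2 * w m) := by ring
  have hcoef : (L - ε/4) * (2 * w m) ≤ L * (2 * w m) := by nlinarith
  rw [hsym] at htri
  nlinarith [htri, hmid2, hliftT, hliftS, hcoef]

/-- Segment estimate, general version. -/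
lemma seg_bound (hN : IsNormBetween N) (hf : LipM N f) (hS : NoStar N f ε)
    (hε : 0 < ε) (hL : ε < lipNM N f)
    {t s : ℝ} (ht0 : 0 ≤ t) (ht1 : t ≤ 1) (hs0 : 0 ≤ s) (hs1 : s ≤ 1) :
    ‖f (segM t ht0 ht1) - f (segM s hs0 hs1)‖ ≤ (lipNM N f - ε / 4) * |t - s| := by
  rcases le_total t s with hts | hts
  · have := seg_bound_le hN hf hS hε hL ht0 hs1 hts
    rw [abs_of_nonpos (by linarith), neg_sub]
    exact this
  · have := seg_bound_le hN hf hS hε hL hs0 ht1 hts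
    rw [abs_of_nonneg (by linarith)]
    calc ‖f (segM t ht0 ht1) - f (segM s hs0 hs1)‖
        = ‖f (segM s hs0 hs1) - f (segM t ht0 ht1)‖ := norm_sub_rev _ _
      _ ≤ (lipNM N f - ε / 4) * (t - s) := this

lemma grid_base0 (n k : ℕ) : 0 ≤ (k : ℝ) / 2 ^ n := by positivity

lemma grid_base1 {n k : ℕ} (hk : k ≤ 2 ^ n) : (k : ℝ) / 2 ^ n ≤ 1 := by
  rw [div_le_one (by positivity)]
  exact_mod_cast hk

/-- the big constant -/
noncomputable def Kb (L ε : ℝ) : ℝ := 48 * (L + 1) / ε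

/-- the final gap -/
noncomputable def del0 (L ε : ℝ) : ℝ := min (ε / 8) (ε / (2 * Kb L ε))

lemma Kb_pos {L ε : ℝ} (hε : 0 < ε) (hL : ε < L) : 0 < Kb L ε := by
  unfold Kb
  have : (0:ℝ) < L := lt_trans hε hL
  positivity

lemma del0_pos {L ε : ℝ} (hε : 0 < ε) (hL : ε < L) : 0 < del0 L ε := by
  unfold del0
  have := Kb_pos hε hL
  positivity

lemma del0_le_eps8 {L ε : ℝ} : del0 L ε ≤ ε / 8 := min_le_left _ _

lemma del0_le_kb {L ε : ℝ} : del0 L ε ≤ ε / (2 * Kb L ε) := min_le_right _ _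

lemma Kb_eq {L ε : ℝ} (hε : 0 < ε) : ε * Kb L ε = 48 * (L + 1) := by
  unfold Kb
  field_simp

/-- the near-pair bound via `NoStar` -/
lemma near_bound (hN : IsNormBetween N) (hS : NoStar N f ε)
    (hε : 0 < ε) (hL : ε < lipNM N f)
    {n k : ℕ} (hk : k ≤ 2 ^ n) (x : ↥Mset) (hne : (x : ℝ × ℝ) ≠ gridPt n k)
    (hcase : N (gridPt n k - (x : ℝ × ℝ)) ≤ Kb (lipNM N f) ε * w (n + 1)) :
    ‖f (gridM n k hk) - f x‖ ≤
      (lipNM N f - del0 (lipNM N f) ε) * N (gridPt n k - (x : ℝ × ℝ)) := by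
  set L := lipNM N f with hLdef
  set d := N (gridPt n k - (x : ℝ × ℝ)) with hd
  have hdpos : 0 < d := N_pos hN (sub_ne_zero.mpr (fun hc => hne hc.symm))
  have happ := hS n k hk x hne
  rw [← hd] at happ
  have hKbp := Kb_pos hε hL
  -- (ε/2) * w (n+1) ≥ (ε/2) * (d / Kb) ≥ del0 * d
  have h1 : (ε / 2) * (d / Kb L ε) ≤ ε / 2 * w (n + 1) := by
    apply mul_le_mul_of_nonneg_left ?_ (by linarith)
    rw [div_le_iff₀ hKbp]
    linarith [hcase, mul_comm (Kb L ε) (w (n+1))]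
  have h2 : del0 L ε * d ≤ (ε / 2) * (d / Kb L ε) := by
    have hdel := del0_le_kb (L := L) (ε := ε)
    have he : (ε / 2) * (d / Kb L ε) = (ε / (2 * Kb L ε)) * d := by
      field_simp
    rw [he]
    exact mul_le_mul_of_nonneg_right hdel (le_of_lt hdpos)
  nlinarith [happ, h1, h2]

/-- mixed pair bound -/
lemma mixed_bound (hN : IsNormBetween N) (hf : LipM N f) (hS : NoStar N f ε)
    (hε : 0 < ε) (hL : ε < lipNM N f)
    {n k : ℕ} (hk : k ≤ 2 ^ n) {s : ℝ} (hs0 : 0 ≤ s) (hs1 : s ≤ 1) :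
    ‖f (gridM n k hk) - f (segM s hs0 hs1)‖ ≤
      (lipNM N f - del0 (lipNM N f) ε) * N (gridPt n k - segPt s) := by
  set L := lipNM N f with hLdef
  have hne : ((segM s hs0 hs1 : ℝ × ℝ)) ≠ gridPt n k := by
    show segPt s ≠ gridPt n k
    exact (grid_ne_seg n k s).symm
  rcases le_or_gt (N (gridPt n k - segPt s)) (Kb L ε * w (n + 1)) with hcase | hcase
  · exact near_bound hN hS hε hL hk _ hne hcase
  · -- far case: go through the base point
    set d := N (gridPt n k - segPt s) with hd
    have hdpos : 0 < d := N_pos hN (sub_ne_zero.mpr (fun hc => hne hc.symm))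
    have hchain := chain_bound hN hf hS hε hL hk (grid_base0 n k) (grid_base1 hk)
    have hseg := seg_bound hN hf hS hε hL (grid_base0 n k) (grid_base1 hk) hs0 hs1
    have htri := norm_sub_le_norm_sub_add_norm_sub (f (gridM n k hk))
      (f (segM ((k : ℝ) / 2 ^ n) (grid_base0 n k) (grid_base1 hk))) (f (segM s hs0 hs1))
    -- |k/2^n - s| ≤ d
    have hfst : |(k : ℝ) / 2 ^ n - s| ≤ d := by
      have := N_fst_le hN (gridPt n k - segPt s)
      have e1 : (gridPt n k - segPt s).1 = (k : ℝ) / 2 ^ n - s := rfl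
      rw [e1] at this
      exact this
    have hL4 : 0 ≤ L - ε / 4 := by linarith
    have hL2 : 0 ≤ L - ε / 2 := by linarith
    have hsegd : ‖f (segM ((k : ℝ) / 2 ^ n) (grid_base0 n k) (grid_base1 hk)) -
        f (segM s hs0 hs1)‖ ≤ (L - ε / 4) * d :=
      le_trans hseg (mul_le_mul_of_nonneg_left hfst hL4)
    -- (L - ε/2) * w n ≤ (ε/8) * d
    have hwn : Kb L ε * w n < 2 * d := by
      have hh : w (n+1) = w n / 2 := w_half n
      have : Kb L ε * w (n + 1) = Kb L ε * w n / 2 := by rw [hh]; ring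
      linarith
    have hKbe := Kb_eq (L := L) hε
    have hco : (L - ε / 2) * w n ≤ (ε / 8) * d := by
      have hq1 : (L - ε / 2) * w n ≤ 3 * (L + 1) * w n := by
        have := w_pos n
        nlinarith
      have hq2 : 3 * (L + 1) * w n = (ε / 16) * (Kb L ε * w n) := by
        linear_combination (-(w n) / 16) * hKbe
      have hq3 : (ε / 16) * (Kb L ε * w n) ≤ (ε / 16) * (2 * d) := by
        apply mul_le_mul_of_nonneg_left (le_of_lt hwn) (by linarith)
      calc (L - ε / 2) * w n ≤ 3 * (L + 1) * w n := hq1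
        _ = (ε / 16) * (Kb L ε * w n) := hq2
        _ ≤ (ε / 16) * (2 * d) := hq3
        _ = (ε / 8) * d := by ring
    have hdel8 : del0 L ε ≤ ε / 8 := del0_le_eps8
    have hdd : (L - ε/8) * d ≤ (L - del0 L ε) * d := by nlinarith [hdpos]
    nlinarith [htri, hchain, hsegd, hco, hdd]

/-- grid-grid pair bound (different levels, n < m) -/
lemma gg_bound (hN : IsNormBetween N) (hf : LipM N f) (hS : NoStar N f ε)
    (hε : 0 < ε) (hL : ε < lipNM N f)
    {n k m l : ℕ} (hk : k ≤ 2 ^ n) (hl : l ≤ 2 ^ m) (hnm : n < m) :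
    ‖f (gridM n k hk) - f (gridM m l hl)‖ ≤
      (lipNM N f - del0 (lipNM N f) ε) * N (gridPt n k - gridPt m l) := by
  set L := lipNM N f with hLdef
  have hne : ((gridM m l hl : ℝ × ℝ)) ≠ gridPt n k := by
    show gridPt m l ≠ gridPt n k
    exact grid_ne_diff_level (by omega)
  rcases le_or_gt (N (gridPt n k - gridPt m l)) (Kb L ε * w (n + 1)) with hcase | hcase
  · exact near_bound hN hS hε hL hk _ hne hcase
  · set d := N (gridPt n k - gridPt m l) with hd
    have hdpos : 0 < d := N_pos hN (sub_ne_zero.mpr (fun hc => hne hc.symm))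
    have hchain1 := chain_bound hN hf hS hε hL hk (grid_base0 n k) (grid_base1 hk)
    have hchain2 := chain_bound hN hf hS hε hL hl (grid_base0 m l) (grid_base1 hl)
    have hseg := seg_bound hN hf hS hε hL (grid_base0 n k) (grid_base1 hk)
      (grid_base0 m l) (grid_base1 hl)
    have hfst : |(k : ℝ) / 2 ^ n - (l : ℝ) / 2 ^ m| ≤ d := by
      have := N_fst_le hN (gridPt n k - gridPt m l)
      have e1 : (gridPt n k - gridPt m l).1 = (k : ℝ) / 2 ^ n - (l : ℝ) / 2 ^ m := rfl
      rw [e1] at this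
      exact this
    have hL4 : 0 ≤ L - ε / 4 := by linarith
    have hL2 : 0 ≤ L - ε / 2 := by linarith
    have htri : ‖f (gridM n k hk) - f (gridM m l hl)‖ ≤
        ‖f (gridM n k hk) - f (segM ((k : ℝ) / 2 ^ n) (grid_base0 n k) (grid_base1 hk))‖ +
        ‖f (segM ((k : ℝ) / 2 ^ n) (grid_base0 n k) (grid_base1 hk)) -
          f (segM ((l : ℝ) / 2 ^ m) (grid_base0 m l) (grid_base1 hl))‖ +
        ‖f (segM ((l : ℝ) / 2 ^ m) (grid_base0 m l) (grid_base1 hl)) - f (gridM m l hl)‖ := by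
      have h1 := norm_sub_le_norm_sub_add_norm_sub (f (gridM n k hk))
        (f (segM ((k : ℝ) / 2 ^ n) (grid_base0 n k) (grid_base1 hk))) (f (gridM m l hl))
      have h2 := norm_sub_le_norm_sub_add_norm_sub
        (f (segM ((k : ℝ) / 2 ^ n) (grid_base0 n k) (grid_base1 hk)))
        (f (segM ((l : ℝ) / 2 ^ m) (grid_base0 m l) (grid_base1 hl))) (f (gridM m l hl))
      linarith
    have hsegd : ‖f (segM ((k : ℝ) / 2 ^ n) (grid_base0 n k) (grid_base1 hk)) -
        f (segM ((l : ℝ) / 2 ^ m) (grid_base0 m l) (grid_base1 hl))‖ ≤ (L - ε / 4) * d :=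
      le_trans hseg (mul_le_mul_of_nonneg_left hfst hL4)
    have hchain2' : ‖f (segM ((l : ℝ) / 2 ^ m) (grid_base0 m l) (grid_base1 hl)) -
        f (gridM m l hl)‖ ≤ (L - ε / 2) * w m := by
      rw [norm_sub_rev]
      exact hchain2
    -- (L - ε/2) * (w n + w m) ≤ (ε/8) * d
    have hwm_le : w m ≤ w (n + 1) := w_mono (by omega)
    have hwn2 : w n = 2 * w (n + 1) := by have := w_half n; linarith
    have hKbe := Kb_eq (L := L) hε
    have hco : (L - ε / 2) * w n + (L - ε / 2) * w m ≤ (ε / 8) * d := by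
      have hwp := w_pos (n+1)
      have hsum : (L - ε / 2) * w n + (L - ε / 2) * w m ≤ 3 * (L + 1) * w (n+1) := by
        nlinarith [hwm_le, hL2, hε, hL]
      have hq2 : 3 * (L + 1) * w (n+1) = (ε / 16) * (Kb L ε * w (n+1)) := by
        linear_combination (-(w (n+1)) / 16) * hKbe
      have hq3 : (ε / 16) * (Kb L ε * w (n+1)) ≤ (ε / 16) * d :=
        mul_le_mul_of_nonneg_left (le_of_lt hcase) (by linarith)
      have hd8 : (ε/16) * d ≤ (ε/8) * d := by nlinarith [hdpos]
      linarith
    have hdel8 : del0 L ε ≤ ε / 8 := del0_le_eps8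
    have hdd : (L - ε/8) * d ≤ (L - del0 L ε) * d := by nlinarith [hdpos]
    nlinarith [htri, hchain1, hsegd, hchain2', hco, hdd]

/-- grid-grid pair bound, same level -/
lemma gg_same_bound (hN : IsNormBetween N) (hS : NoStar N f ε)
    (hε : 0 < ε) (hL : ε < lipNM N f)
    {m k l : ℕ} (hk : k ≤ 2 ^ m) (hl : l ≤ 2 ^ m) (hkl : k < l) :
    ‖f (gridM m k hk) - f (gridM m l hl)‖ ≤
      (lipNM N f - del0 (lipNM N f) ε) * N (gridPt m k - gridPt m l) := by
  set L := lipNM N f with hLdef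
  have hd : N (gridPt m k - gridPt m l) = ((l - k : ℕ) : ℝ) * w m := by
    rw [N_eq_horiz hN (a := gridPt m k) (b := gridPt m l) rfl]
    show |(k : ℝ) / 2 ^ m - (l : ℝ) / 2 ^ m| = _
    rw [div_sub_div_same, abs_div, abs_of_pos (by positivity : (0:ℝ) < 2 ^ m)]
    rw [abs_of_nonpos (by
      have : (k : ℝ) ≤ l := by exact_mod_cast le_of_lt hkl
      linarith)]
    rw [Nat.cast_sub (le_of_lt hkl)]
    unfold w
    ring
  have hlev := level_bound hN hS hε hL m (l - k) k (by omega)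
  have hgml : gridM m (k + (l - k)) (by omega : k + (l - k) ≤ 2 ^ m) = gridM m l hl := by
    apply Subtype.ext
    show gridPt m (k + (l - k)) = gridPt m l
    congr 1
    omega
  rw [hgml] at hlev
  have hwm := w_pos m
  have hlk1 : (1 : ℝ) ≤ ((l - k : ℕ) : ℝ) := by
    have : 1 ≤ l - k := by omega
    exact_mod_cast this
  have hdel : del0 L ε ≤ ε / 4 := le_trans del0_le_eps8 (by linarith)
  rw [hd]
  rw [← hLdef] at hlev
  have hX : (0:ℝ) ≤ ((l - k : ℕ) : ℝ) * w m := by positivity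
  calc ‖f (gridM m k hk) - f (gridM m l hl)‖ ≤ (L - ε / 4) * (((l - k : ℕ) : ℝ) * w m) := hlev
    _ ≤ (L - del0 L ε) * (((l - k : ℕ) : ℝ) * w m) := by nlinarith [hdel, hX]

/-- Case C is impossible. -/
lemma noStar_contra (hN : IsNormBetween N) (hf : LipM N f) (hS : NoStar N f ε)
    (hε : 0 < ε) (hL : ε < lipNM N f) : False := by
  set L := lipNM N f with hLdef
  set δ := del0 L ε with hδ
  have hδ0 : 0 < δ := del0_pos hε hL
  have key : ∀ p q : ↥Mset, p ≠ q → ‖f p - f q‖ ≤ (L - δ) * N ((p : ℝ × ℝ) - (q : ℝ × ℝ)) := by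
    intro p q hpq
    rcases Mset_cases p.2 with ⟨n, k, hk, hpv⟩ | ⟨t, ht0, ht1, hpv⟩ <;>
      rcases Mset_cases q.2 with ⟨m, l, hl, hqv⟩ | ⟨s, hs0, hs1, hqv⟩
    · -- grid / grid
      have hp : p = gridM n k hk := Subtype.ext hpv
      have hq : q = gridM m l hl := Subtype.ext hqv
      rw [hp, hq]
      show ‖f (gridM n k hk) - f (gridM m l hl)‖ ≤ (L - δ) * N (gridPt n k - gridPt m l)
      rcases Nat.lt_trichotomy n m with hnm | hnm | hnm
      · exact gg_bound hN hf hS hε hL hk hl hnm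
      · subst hnm
        rcases Nat.lt_trichotomy k l with hkl | hkl | hkl
        · exact gg_same_bound hN hS hε hL hk hl hkl
        · exfalso
          apply hpq
          rw [hp, hq]
          exact Subtype.ext (by subst hkl; rfl)
        · rw [norm_sub_rev, N_sub_rev hN]
          exact gg_same_bound hN hS hε hL hl hk hkl
      · rw [norm_sub_rev, N_sub_rev hN]
        exact gg_bound hN hf hS hε hL hl hk hnm
    · -- grid / seg
      have hp : p = gridM n k hk := Subtype.ext hpv
      have hq : q = segM s hs0 hs1 := Subtype.ext hqv
      rw [hp, hq]
      exact mixed_bound hN hf hS hε hL hk hs0 hs1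
    · -- seg / grid
      have hp : p = segM t ht0 ht1 := Subtype.ext hpv
      have hq : q = gridM m l hl := Subtype.ext hqv
      rw [hp, hq, norm_sub_rev, N_sub_rev hN]
      exact mixed_bound hN hf hS hε hL hl ht0 ht1
    · -- seg / seg
      have hp : p = segM t ht0 ht1 := Subtype.ext hpv
      have hq : q = segM s hs0 hs1 := Subtype.ext hqv
      rw [hp, hq]
      show ‖f (segM t ht0 ht1) - f (segM s hs0 hs1)‖ ≤ (L - δ) * N (segPt t - segPt s)
      have hdd : N (segPt t - segPt s) = |t - s| :=
        N_eq_horiz hN (a := segPt t) (b := segPt s) rfl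
      rw [hdd]
      have hdel : δ ≤ ε / 4 := le_trans del0_le_eps8 (by linarith)
      calc ‖f (segM t ht0 ht1) - f (segM s hs0 hs1)‖ ≤ (L - ε / 4) * |t - s| :=
        seg_bound hN hf hS hε hL ht0 ht1 hs0 hs1
        _ ≤ (L - δ) * |t - s| := by nlinarith [abs_nonneg (t - s)]
  have hub : ∀ r ∈ rset N f, r ≤ L - δ := by
    rintro r ⟨p, q, hpq, rfl⟩
    rw [div_le_iff₀ (N_pair_pos hN hpq)]
    exact key p q hpq
  have : L ≤ L - δ := csSup_le (rset_nonempty f) hub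
  linarith

/-- the zero map strongly attains -/
lemma lip_zero : lipNM N (fun _ : ↥Mset => (0 : Y)) = 0 := by
  have hmem : (0 : ℝ) ∈ rset N (fun _ : ↥Mset => (0 : Y)) := by
    refine ⟨z0, z1, z0_ne_z1, ?_⟩
    simp
  have hub : ∀ r ∈ rset N (fun _ : ↥Mset => (0 : Y)), r ≤ 0 := by
    rintro r ⟨p, q, hpq, rfl⟩
    simp
  exact le_antisymm (csSup_le ⟨0, hmem⟩ hub) (le_csSup ⟨0, hub⟩ hmem)

end CaseC

end SNAMaux

open SNAMaux in
/-- For every norm `N` on `ℝ²` with `‖·‖_∞ ≤ N ≤ ‖·‖₁` and every Banach space `Y`, the set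
of strongly norm attaining Lipschitz maps `M → Y` is dense: every Lipschitz `f : M → Y` is
within `ε` (in Lipschitz distance) of a strongly norm attaining Lipschitz map. -/
theorem stmt_4 (N : ℝ × ℝ → ℝ) (hN : IsNormBetween N)
    {Y : Type*} [NormedAddCommGroup Y] [NormedSpace ℝ Y] [CompleteSpace Y]
    (f : ↥Mset → Y) (hf : LipM N f) (ε : ℝ) (hε : 0 < ε) :
    ∃ g : ↥Mset → Y, LipM N g ∧ SNAM N g ∧ lipNM N (fun p => f p - g p) ≤ ε := by
  classical
  by_cases hA : lipNM N f ≤ ε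
  · -- the zero map works
    refine ⟨fun _ => 0, ⟨0, fun p q => by simp [N_nonneg hN]⟩, ?_, ?_⟩
    · refine ⟨z0, z1, z0_ne_z1, ?_⟩
      rw [lip_zero]
      simp
    · have heq : (fun p : ↥Mset => f p - (fun _ : ↥Mset => (0 : Y)) p) = f := by
        funext p
        simp
      rw [heq]
      exact hA
  · push_neg at hA
    by_cases hstar : ∃ (n k : ℕ) (hk : k ≤ 2 ^ n) (x : ↥Mset), (x : ℝ × ℝ) ≠ gridPt n k ∧
        lipNM N f * N (gridPt n k - (x : ℝ × ℝ)) ≤ ‖f (gridM n k hk) - f x‖ + ε / 2 * w (n + 1)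
    · obtain ⟨n, k, hk, xh, hne, hineq⟩ := hstar
      exact caseB hN hf hε hk xh (fun hc => hne (congrArg Subtype.val hc)) hineq hA
    · exfalso
      apply noStar_contra hN hf ?_ hε hA
      intro n k hk x hne
      push_neg at hstar
      exact hstar n k hk x hne
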